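/- arXiv:1705.00133 — 6 statements merged into one kernel-verified Lean document; each statement's English description precedes it below -/
import Mathlib

section
/- (Approximate Strassen theorem, finite case.) Let A, B be finite sets, μ₁ ∈ SubDist(A), μ₂ ∈ SubDist(B), R ⊆ A × B, and ε, δ ≥ 0. If for every X ⊆ A we have μ₁[X] ≤ e^ε · μ₂[R(X)] + δ, where R(X) = {b ∈ B : ∃a ∈ X, (a,b) ∈ R}, then there exists an (ε,δ)-approximate ⋆-lifting of μ₁ and μ₂ for R. -/
open scoped ENNReal

noncomputable section

def mass {A : Type*} (μ : A → ℝ≥0∞) (X : Set A) : ℝ≥0∞ := ∑' x : X, μ x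

def SubDist {A : Type*} (μ : A → ℝ≥0∞) : Prop := mass μ Set.univ ≤ 1

def dpDiv {B : Type*} (ε : ℝ) (μ ν : B → ℝ≥0∞) : ℝ≥0∞ :=
  ⨆ E : Set B, (mass μ E - ENNReal.ofReal (Real.exp ε) * mass ν E)

def relImage {A B : Type*} (R : A → B → Prop) (X : Set A) : Set B :=
  {b | ∃ a ∈ X, R a b}

def extL {A B : Type*} (η : A × Option B → ℝ≥0∞) : Option A × Option B → ℝ≥0∞ :=
  fun p => p.1.elim 0 (fun a => η (a, p.2))

def extR {A B : Type*} (η : Option A × B → ℝ≥0∞) : Option A × Option B → ℝ≥0∞ :=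
  fun p => p.2.elim 0 (fun b => η (p.1, b))

/-- The conditions for a pair `(ηL, ηR)` to witness an `(ε,δ)`-approximate ⋆-lifting
of `μ₁` and `μ₂` for the relation `R`.  Here `⋆` is represented by `none`. -/
def IsStarWitness {A B : Type*} (ε δ : ℝ) (μ₁ : A → ℝ≥0∞) (μ₂ : B → ℝ≥0∞)
    (R : A → B → Prop) (ηL : A × Option B → ℝ≥0∞) (ηR : Option A × B → ℝ≥0∞) : Prop :=
  SubDist ηL ∧ SubDist ηR ∧
  (∀ a, (∑' b : Option B, ηL (a, b)) = μ₁ a) ∧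
  (∀ b, (∑' a : Option A, ηR (a, b)) = μ₂ b) ∧
  (∀ a b, ηL (a, some b) ≠ 0 → R a b) ∧
  (∀ a b, ηR (some a, b) ≠ 0 → R a b) ∧
  dpDiv ε (extL ηL) (extR ηR) ≤ ENNReal.ofReal δ

/-- Existence of an `(ε,δ)`-approximate ⋆-lifting. -/
def StarLift {A B : Type*} (ε δ : ℝ) (μ₁ : A → ℝ≥0∞) (μ₂ : B → ℝ≥0∞)
    (R : A → B → Prop) : Prop :=
  ∃ ηL ηR, IsStarWitness ε δ μ₁ μ₂ R ηL ηR

open scoped Classical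

lemma mass_eq_sum {A : Type*} [Fintype A] (μ : A → ℝ≥0∞) (X : Set A) :
    mass μ X = ∑ a, X.indicator μ a := by
  rw [mass, tsum_subtype, tsum_fintype]

lemma mass_univ_eq {A : Type*} [Fintype A] (μ : A → ℝ≥0∞) :
    mass μ Set.univ = ∑ a, μ a := by
  rw [mass_eq_sum]; simp

lemma mass_coe {A : Type*} [Fintype A] (μ : A → ℝ≥0∞) (X : Finset A) :
    mass μ (↑X : Set A) = ∑ a ∈ X, μ a := by
  rw [mass_eq_sum]
  rw [Finset.sum_congr rfl (fun a _ => Set.indicator_apply (↑X) μ a)]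
  simp [Finset.sum_ite_mem]



/-- Feasible flows in a bipartite network. -/
def Feas {A B : Type*} [Fintype A] [Fintype B] (R : A → B → Prop)
    (ν₁ : A → ℝ) (ν₂ : B → ℝ) (γ : A × B → ℝ) : Prop :=
  (∀ e, 0 ≤ γ e) ∧ (∀ e, γ e ≠ 0 → R e.1 e.2) ∧
  (∀ a, ∑ b, γ (a, b) ≤ ν₁ a) ∧ (∀ b, ∑ a, γ (a, b) ≤ ν₂ b)

inductive FlowReach {A B : Type*} (R : A → B → Prop) (base : A → Prop)
    (pos : A → B → Prop) : A → Prop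
  | base {a} : base a → FlowReach R base pos a
  | step {a a' b} : FlowReach R base pos a → R a b → pos a' b → FlowReach R base pos a'

theorem exists_max_flow {A B : Type*} [Fintype A] [Fintype B] (R : A → B → Prop)
    (ν₁ : A → ℝ) (ν₂ : B → ℝ) (h₁ : ∀ a, 0 ≤ ν₁ a) (h₂ : ∀ b, 0 ≤ ν₂ b) :
    ∃ γ, Feas R ν₁ ν₂ γ ∧ ∀ γ', Feas R ν₁ ν₂ γ' → ∑ e, γ' e ≤ ∑ e, γ e := by
  set K : Set (A × B → ℝ) := {γ | Feas R ν₁ ν₂ γ} with hKdef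
  have hK0 : (0 : A × B → ℝ) ∈ K := by
    refine ⟨fun e => le_refl 0, fun e he => absurd rfl he, ?_, ?_⟩ <;>
      simp [h₁, h₂]
  have hsub : K ⊆ Set.univ.pi (fun e : A × B => Set.Icc 0 (ν₁ e.1)) := by
    intro γ hγ e _
    refine ⟨hγ.1 e, le_trans ?_ (hγ.2.2.1 e.1)⟩
    exact Finset.single_le_sum (fun b _ => hγ.1 (e.1, b)) (Finset.mem_univ e.2)
  have hclosed : IsClosed K := by
    have e1 : IsClosed {γ : A × B → ℝ | ∀ e, 0 ≤ γ e} := by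
      have : {γ : A × B → ℝ | ∀ e, 0 ≤ γ e} = ⋂ e, {γ | 0 ≤ γ e} := by
        ext γ; simp
      rw [this]
      exact isClosed_iInter fun e => isClosed_le continuous_const (continuous_apply e)
    have e2 : IsClosed {γ : A × B → ℝ | ∀ e, γ e ≠ 0 → R e.1 e.2} := by
      have : {γ : A × B → ℝ | ∀ e, γ e ≠ 0 → R e.1 e.2}
          = ⋂ e ∈ {e : A × B | ¬ R e.1 e.2}, {γ | γ e = 0} := by
        ext γ
        simp only [Set.mem_iInter, Set.mem_setOf_eq]
        constructor
        · intro h e he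
          by_contra hne; exact he (h e hne)
        · intro h e hne
          by_contra hR; exact hne (h e hR)
      rw [this]
      exact isClosed_biInter fun e he =>
        isClosed_eq (continuous_apply e) continuous_const
    have e3 : IsClosed {γ : A × B → ℝ | ∀ a, ∑ b, γ (a, b) ≤ ν₁ a} := by
      have : {γ : A × B → ℝ | ∀ a, ∑ b, γ (a, b) ≤ ν₁ a}
          = ⋂ a, {γ | ∑ b, γ (a, b) ≤ ν₁ a} := by ext γ; simp
      rw [this]
      exact isClosed_iInter fun a => isClosed_le
        (continuous_finset_sum _ fun b _ => continuous_apply (a, b)) continuous_const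
    have e4 : IsClosed {γ : A × B → ℝ | ∀ b, ∑ a, γ (a, b) ≤ ν₂ b} := by
      have : {γ : A × B → ℝ | ∀ b, ∑ a, γ (a, b) ≤ ν₂ b}
          = ⋂ b, {γ | ∑ a, γ (a, b) ≤ ν₂ b} := by ext γ; simp
      rw [this]
      exact isClosed_iInter fun b => isClosed_le
        (continuous_finset_sum _ fun a _ => continuous_apply (a, b)) continuous_const
    have : K = _ ∩ (_ ∩ (_ ∩ _)) := rfl
    exact ((e1.inter (e2.inter (e3.inter e4))) : _)
  have hcpt : IsCompact K := by
    refine IsCompact.of_isClosed_subset ?_ hclosed hsub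
    exact isCompact_univ_pi fun e => isCompact_Icc
  obtain ⟨γ, hγK, hmax⟩ := hcpt.exists_isMaxOn ⟨0, hK0⟩
    ((continuous_finset_sum _ fun e _ => continuous_apply e).continuousOn)
  exact ⟨γ, hγK, fun γ' h => hmax h⟩

theorem flow_exists {A B : Type*} [Fintype A] [Fintype B] (R : A → B → Prop)
    (ν₁ : A → ℝ) (ν₂ : B → ℝ) (h₁ : ∀ a, 0 ≤ ν₁ a) (h₂ : ∀ b, 0 ≤ ν₂ b) (d : ℝ)
    (hcut : ∀ X : Finset A, ∑ a ∈ X, ν₁ a ≤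
      (∑ b ∈ Finset.univ.filter (fun b => ∃ a ∈ X, R a b), ν₂ b) + d) :
    ∃ γ : A × B → ℝ, Feas R ν₁ ν₂ γ ∧ ∑ a, ν₁ a ≤ (∑ e, γ e) + d := by
  obtain ⟨γ, hγ, hmax⟩ := exists_max_flow R ν₁ ν₂ h₁ h₂
  obtain ⟨hpos, hsupp, hrow, hcol⟩ := hγ
  refine ⟨γ, ⟨hpos, hsupp, hrow, hcol⟩, ?_⟩
  set Rch := FlowReach R (fun a => ∑ b, γ (a, b) < ν₁ a) (fun a b => 0 < γ (a, b)) with hRch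
  -- Spare capacity along augmenting paths
  have spare : ∀ a, Rch a → ∃ c : ℕ, ∃ t : ℝ, 0 < t ∧ ∀ s, 0 < s → s ≤ t →
      ∃ γ', Feas R ν₁ ν₂ γ' ∧ (∀ b, ∑ a', γ' (a', b) = ∑ a', γ (a', b)) ∧
        (∑ b, γ' (a, b)) + s ≤ ν₁ a ∧ (∀ e, γ e - c * s ≤ γ' e) := by
    intro a ha
    induction ha with
    | @base a h =>
      refine ⟨1, ν₁ a - ∑ b, γ (a, b), by linarith, fun s hs hst => ?_⟩
      exact ⟨γ, ⟨hpos, hsupp, hrow, hcol⟩, fun b => rfl, by linarith,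
        fun e => by nlinarith [hpos e]⟩
    | @step a a' b ha hR hp ih =>
      obtain ⟨c, t, ht, H⟩ := ih
      refine ⟨c + 1, min t (γ (a', b) / (c + 1)), ?_, fun s hs hst => ?_⟩
      · refine lt_min ht (div_pos hp (by positivity))
      obtain ⟨γ', ⟨hpos', hsupp', hrow', hcol'⟩, hcols, hrowa, hpt⟩ :=
        H s hs (le_trans hst (min_le_left _ _))
      have hγab : (c + 1 : ℝ) * s ≤ γ (a', b) := by
        have := le_trans hst (min_le_right _ _)
        rw [le_div_iff₀ (by positivity)] at this
        linarith
      have hsle : s ≤ γ' (a', b) := by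
        have := hpt (a', b)
        push_cast
        push_cast at hγab
        linarith
      set γ'' : A × B → ℝ := fun e =>
        γ' e + (if e = (a, b) then s else 0) - (if e = (a', b) then s else 0) with hγ''
      have hrow'' : ∀ x, ∑ y, γ'' (x, y) =
          (∑ y, γ' (x, y)) + (if x = a then s else 0) - (if x = a' then s else 0) := by
        intro x
        simp only [hγ'', Finset.sum_sub_distrib, Finset.sum_add_distrib, Prod.mk.injEq]
        congr 1 <;> [congr 1; skip]
        · by_cases hx : x = a <;> simp [hx]
        · by_cases hx : x = a' <;> simp [hx]
      have hcol'' : ∀ y, ∑ x, γ'' (x, y) = ∑ x, γ' (x, y) := by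
        intro y
        simp only [hγ'', Finset.sum_sub_distrib, Finset.sum_add_distrib, Prod.mk.injEq]
        by_cases hy : y = b <;> simp [hy]
      have hFeas'' : Feas R ν₁ ν₂ γ'' := by
        refine ⟨?_, ?_, ?_, ?_⟩
        · intro e
          have hpe := hpos' e
          simp only [hγ'']
          split_ifs with hi1 hi2 hi2
          · linarith
          · linarith
          · subst hi2; linarith [hsle]
          · linarith
        · intro e he
          simp only [hγ''] at he
          by_cases h1 : e = (a, b)
          · subst h1; exact hR
          · by_cases h2 : e = (a', b)
            · subst h2; exact hsupp (a', b) (ne_of_gt hp)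
            · simp only [h1, h2, if_false] at he
              exact hsupp' e (by simpa using he)
        · intro x
          rw [hrow'' x]
          have := hrow' x
          split_ifs with hx hx' hx' <;> first
            | (subst hx; linarith [hrowa])
            | linarith
        · intro y
          rw [hcol'' y, hcols y]; exact hcol y
      refine ⟨γ'', hFeas'', fun y => by rw [hcol'' y, hcols y], ?_, ?_⟩
      · rw [hrow'' a']
        by_cases hx' : a' = a <;> simp [hx']
        · subst hx'; linarith [hrowa]
        · linarith [hrow' a', hs.le, hrowa]
      · intro e
        have hpe := hpt e
        simp only [hγ'']
        push_cast
        split_ifs <;> linarith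
  -- saturation of columns adjacent to reachable rows
  have sat : ∀ a, Rch a → ∀ b, R a b → ∑ x, γ (x, b) = ν₂ b := by
    intro a ha b hb
    refine le_antisymm (hcol b) ?_
    by_contra hlt
    push_neg at hlt
    obtain ⟨c, t, ht, H⟩ := spare a ha
    set s := min t (ν₂ b - ∑ x, γ (x, b)) with hsdef
    have hs : 0 < s := lt_min ht (by linarith)
    obtain ⟨γ', ⟨hpos', hsupp', hrow', hcol'⟩, hcols, hrowa, hpt⟩ :=
      H s hs (min_le_left _ _)
    set γ'' : A × B → ℝ := fun e => γ' e + (if e = (a, b) then s else 0) with hg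
    have hFeas'' : Feas R ν₁ ν₂ γ'' := by
      refine ⟨?_, ?_, ?_, ?_⟩
      · intro e; have := hpos' e; simp only [hg]; split_ifs <;> linarith
      · intro e he
        simp only [hg] at he
        by_cases h1 : e = (a, b)
        · subst h1; exact hb
        · simp only [h1, if_false, add_zero] at he; exact hsupp' e he
      · intro x
        have hsum : ∑ y, γ'' (x, y) = (∑ y, γ' (x, y)) + (if x = a then s else 0) := by
          simp only [hg, Finset.sum_add_distrib, Prod.mk.injEq]
          congr 1
          by_cases hx : x = a <;> simp [hx]
        rw [hsum]
        split_ifs with hx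
        · subst hx; linarith
        · simpa using hrow' x
      · intro y
        have hsum : ∑ x, γ'' (x, y) = (∑ x, γ' (x, y)) + (if y = b then s else 0) := by
          simp only [hg, Finset.sum_add_distrib, Prod.mk.injEq]
          congr 1
          by_cases hy : y = b <;> simp [hy]
        rw [hsum, hcols y]
        split_ifs with hy
        · subst hy
          have : s ≤ ν₂ y - ∑ x, γ (x, y) := min_le_right _ _
          linarith
        · simpa using hcol y
    have hmass' : ∑ e, γ' e = ∑ e, γ e := by
      rw [Fintype.sum_prod_type_right, Fintype.sum_prod_type_right]
      exact Finset.sum_congr rfl fun b _ => hcols b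
    have hmass'' : ∑ e, γ'' e = (∑ e, γ' e) + s := by
      simp only [hg, Finset.sum_add_distrib]
      congr 1
      rw [Finset.sum_ite_eq' Finset.univ (a, b) (fun _ => s)]
      simp
    have := hmax γ'' hFeas''
    rw [hmass'', hmass'] at this
    linarith
  have unreach_row : ∀ a, ¬ Rch a → ∑ b, γ (a, b) = ν₁ a := by
    intro a hn
    refine le_antisymm (hrow a) ?_
    by_contra hlt
    push_neg at hlt
    exact hn (FlowReach.base hlt)
  -- the cut
  set X : Finset A := Finset.univ.filter (fun a => Rch a) with hX
  set Y : Finset B := Finset.univ.filter (fun b => ∃ a ∈ X, R a b) with hY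
  have hzero : ∀ a, a ∉ X → ∀ b, b ∈ Y → γ (a, b) = 0 := by
    intro a haX b hbY
    by_contra hne
    have hpos' : 0 < γ (a, b) := lt_of_le_of_ne (hpos (a, b)) (Ne.symm hne)
    rw [hY, Finset.mem_filter] at hbY
    obtain ⟨-, a'', ha''X, hR''⟩ := hbY
    rw [hX, Finset.mem_filter] at ha''X haX
    exact haX ⟨Finset.mem_univ a, FlowReach.step ha''X.2 hR'' hpos'⟩
  have hzero2 : ∀ a, a ∈ X → ∀ b, b ∉ Y → γ (a, b) = 0 := by
    intro a haX b hbY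
    by_contra hne
    have := hsupp (a, b) hne
    rw [hY, Finset.mem_filter] at hbY
    exact hbY ⟨Finset.mem_univ b, a, haX, this⟩
  have hS1 : ∑ b ∈ Y, ν₂ b = ∑ a ∈ X, ∑ b, γ (a, b) := by
    have e1 : ∀ b ∈ Y, ν₂ b = ∑ a ∈ X, γ (a, b) := by
      intro b hbY
      rw [hY, Finset.mem_filter] at hbY
      obtain ⟨-, a'', ha''X, hR''⟩ := hbY
      have hXmem := ha''X
      rw [hX, Finset.mem_filter] at hXmem
      rw [← sat a'' hXmem.2 b hR'']
      rw [← Finset.sum_filter_add_sum_filter_not Finset.univ (fun a => Rch a) (fun a => γ (a, b))]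
      rw [← hX]
      have : ∑ a ∈ Finset.univ.filter (fun a => ¬ Rch a), γ (a, b) = 0 := by
        refine Finset.sum_eq_zero fun a haf => ?_
        rw [Finset.mem_filter] at haf
        refine hzero a ?_ b ?_
        · rw [hX, Finset.mem_filter]; tauto
        · rw [hY, Finset.mem_filter]
          exact ⟨Finset.mem_univ b, a'', ha''X, hR''⟩
      rw [this, add_zero]
    rw [Finset.sum_congr rfl e1, Finset.sum_comm]
    refine Finset.sum_congr rfl fun a haX => ?_
    refine Finset.sum_subset (Finset.subset_univ Y) fun b _ hbY => hzero2 a haX b hbY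
  have key : ∑ e, γ e = (∑ b ∈ Y, ν₂ b) +
      ∑ a ∈ Finset.univ.filter (fun a => ¬ Rch a), ∑ b, γ (a, b) := by
    rw [hS1, Fintype.sum_prod_type]
    rw [← Finset.sum_filter_add_sum_filter_not Finset.univ (fun a => Rch a)
      (fun a => ∑ b, γ (a, b))]
  have hnr : ∑ a ∈ Finset.univ.filter (fun a => ¬ Rch a), ∑ b, γ (a, b)
      = ∑ a ∈ Finset.univ.filter (fun a => ¬ Rch a), ν₁ a := by
    refine Finset.sum_congr rfl fun a haf => ?_
    rw [Finset.mem_filter] at haf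
    exact unreach_row a haf.2
  have hsplit : ∑ a, ν₁ a = (∑ a ∈ X, ν₁ a) +
      ∑ a ∈ Finset.univ.filter (fun a => ¬ Rch a), ν₁ a := by
    rw [hX]
    exact (Finset.sum_filter_add_sum_filter_not Finset.univ (fun a => Rch a) ν₁).symm
  have hc := hcut X
  rw [← hY] at hc
  rw [key, hnr, hsplit]
  linarith

theorem approx_strassen_finite {A B : Type*} [Finite A] [Finite B]
    (μ₁ : A → ℝ≥0∞) (μ₂ : B → ℝ≥0∞) (h₁ : SubDist μ₁) (h₂ : SubDist μ₂)
    (R : A → B → Prop) (ε δ : ℝ) (hε : 0 ≤ ε) (hδ : 0 ≤ δ)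
    (h : ∀ X : Set A,
      mass μ₁ X ≤ ENNReal.ofReal (Real.exp ε) * mass μ₂ (relImage R X) + ENNReal.ofReal δ) :
    StarLift ε δ μ₁ μ₂ R := by
  classical
  cases nonempty_fintype A
  cases nonempty_fintype B
  -- finiteness of the distributions
  have hμ₁fin : ∀ a, μ₁ a ≠ ⊤ := by
    intro a
    have : μ₁ a ≤ 1 := by
      refine le_trans ?_ h₁
      rw [mass_univ_eq]
      exact Finset.single_le_sum (fun a _ => zero_le) (Finset.mem_univ a)
    exact ne_top_of_le_ne_top ENNReal.one_ne_top this
  have hμ₂fin : ∀ b, μ₂ b ≠ ⊤ := by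
    intro b
    have : μ₂ b ≤ 1 := by
      refine le_trans ?_ h₂
      rw [mass_univ_eq]
      exact Finset.single_le_sum (fun b _ => zero_le) (Finset.mem_univ b)
    exact ne_top_of_le_ne_top ENNReal.one_ne_top this
  set r1 : A → ℝ := fun a => (μ₁ a).toReal with hr1
  set r2 : B → ℝ := fun b => (μ₂ b).toReal with hr2
  have hμ₁eq : ∀ a, μ₁ a = ENNReal.ofReal (r1 a) := fun a =>
    (ENNReal.ofReal_toReal (hμ₁fin a)).symm
  have hμ₂eq : ∀ b, μ₂ b = ENNReal.ofReal (r2 b) := fun b =>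
    (ENNReal.ofReal_toReal (hμ₂fin b)).symm
  have hr1nn : ∀ a, 0 ≤ r1 a := fun a => ENNReal.toReal_nonneg
  have hr2nn : ∀ b, 0 ≤ r2 b := fun b => ENNReal.toReal_nonneg
  set ν₂ : B → ℝ := fun b => Real.exp ε * r2 b with hν₂
  have hν₂nn : ∀ b, 0 ≤ ν₂ b := fun b => mul_nonneg (Real.exp_pos ε).le (hr2nn b)
  -- real-valued cut condition
  have hcut : ∀ X : Finset A, ∑ a ∈ X, r1 a ≤
      (∑ b ∈ Finset.univ.filter (fun b => ∃ a ∈ X, R a b), ν₂ b) + δ := by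
    intro X
    have hh := h (↑X : Set A)
    rw [mass_coe] at hh
    have himg : relImage R (↑X : Set A)
        = ↑(Finset.univ.filter (fun b => ∃ a ∈ X, R a b)) := by
      ext b; simp [relImage]
    rw [himg, mass_coe] at hh
    have hL : ∑ a ∈ X, μ₁ a = ENNReal.ofReal (∑ a ∈ X, r1 a) := by
      rw [ENNReal.ofReal_sum_of_nonneg (fun a _ => hr1nn a)]
      exact Finset.sum_congr rfl fun a _ => hμ₁eq a
    have hR : ENNReal.ofReal (Real.exp ε) *
          (∑ b ∈ Finset.univ.filter (fun b => ∃ a ∈ X, R a b), μ₂ b) + ENNReal.ofReal δ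
        = ENNReal.ofReal
          ((∑ b ∈ Finset.univ.filter (fun b => ∃ a ∈ X, R a b), ν₂ b) + δ) := by
      rw [ENNReal.ofReal_add (Finset.sum_nonneg fun b _ => hν₂nn b) hδ]
      congr 1
      rw [ENNReal.ofReal_sum_of_nonneg (fun b _ => hν₂nn b)]
      rw [Finset.mul_sum]
      refine Finset.sum_congr rfl fun b _ => ?_
      rw [hμ₂eq b, ← ENNReal.ofReal_mul (Real.exp_pos ε).le]
    rw [hL, hR] at hh
    exact (ENNReal.ofReal_le_ofReal_iff
      (by positivity)).mp hh
  obtain ⟨γ, ⟨hpos, hsupp, hrow, hcol⟩, hbound⟩ :=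
    flow_exists R r1 ν₂ hr1nn hν₂nn δ hcut
  -- the witness pair
  set ηL : A × Option B → ℝ≥0∞ := fun p =>
    p.2.elim (μ₁ p.1 - ENNReal.ofReal (∑ b, γ (p.1, b)))
      (fun b => ENNReal.ofReal (γ (p.1, b))) with hetaL
  set ηR : Option A × B → ℝ≥0∞ := fun p =>
    p.1.elim (μ₂ p.2 - ENNReal.ofReal ((∑ a, γ (a, p.2)) / Real.exp ε))
      (fun a => ENNReal.ofReal (γ (a, p.2) / Real.exp ε)) with hetaR
  have hrow_nn : ∀ a, 0 ≤ ∑ b, γ (a, b) := fun a => Finset.sum_nonneg fun b _ => hpos (a, b)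
  have hrowle : ∀ a, ENNReal.ofReal (∑ b, γ (a, b)) ≤ μ₁ a := fun a => by
    rw [hμ₁eq a]; exact ENNReal.ofReal_le_ofReal (hrow a)
  have hcoldiv : ∀ b, (∑ a, γ (a, b)) / Real.exp ε ≤ r2 b := fun b => by
    rw [div_le_iff₀ (Real.exp_pos ε)]
    calc (∑ a, γ (a, b)) ≤ ν₂ b := hcol b
    _ = r2 b * Real.exp ε := mul_comm _ _
  have hcolle : ∀ b, ENNReal.ofReal ((∑ a, γ (a, b)) / Real.exp ε) ≤ μ₂ b := fun b => by
    rw [hμ₂eq b]; exact ENNReal.ofReal_le_ofReal (hcoldiv b)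
  -- marginals
  have hmargL : ∀ a, (∑' ob : Option B, ηL (a, ob)) = μ₁ a := by
    intro a
    rw [tsum_fintype, Fintype.sum_option]
    have h1 : ηL (a, none) = μ₁ a - ENNReal.ofReal (∑ b, γ (a, b)) := rfl
    have h2 : ∀ b, ηL (a, some b) = ENNReal.ofReal (γ (a, b)) := fun b => rfl
    rw [h1, Finset.sum_congr rfl (fun b _ => h2 b),
      ← ENNReal.ofReal_sum_of_nonneg (fun b _ => hpos (a, b))]
    exact tsub_add_cancel_of_le (hrowle a)
  have hmargR : ∀ b, (∑' oa : Option A, ηR (oa, b)) = μ₂ b := by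
    intro b
    rw [tsum_fintype, Fintype.sum_option]
    have h1 : ηR (none, b) = μ₂ b - ENNReal.ofReal ((∑ a, γ (a, b)) / Real.exp ε) := rfl
    have h2 : ∀ a, ηR (some a, b) = ENNReal.ofReal (γ (a, b) / Real.exp ε) := fun a => rfl
    rw [h1, Finset.sum_congr rfl (fun a _ => h2 a),
      ← ENNReal.ofReal_sum_of_nonneg
        (fun a _ => div_nonneg (hpos (a, b)) (Real.exp_pos ε).le),
      ← Finset.sum_div]
    exact tsub_add_cancel_of_le (hcolle b)
  -- subdistribution properties
  have hsubL : SubDist ηL := by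
    rw [SubDist, mass_univ_eq, Fintype.sum_prod_type]
    have e1 : ∀ a, ∑ ob : Option B, ηL (a, ob) = μ₁ a := fun a => by
      rw [← tsum_fintype (L := .unconditional _)]; exact hmargL a
    rw [Finset.sum_congr rfl fun a _ => e1 a, ← mass_univ_eq]
    exact h₁
  have hsubR : SubDist ηR := by
    rw [SubDist, mass_univ_eq, Fintype.sum_prod_type_right]
    have e1 : ∀ b, ∑ oa : Option A, ηR (oa, b) = μ₂ b := fun b => by
      rw [← tsum_fintype (L := .unconditional _)]; exact hmargR b
    rw [Finset.sum_congr rfl fun b _ => e1 b, ← mass_univ_eq]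
    exact h₂
  -- support properties
  have hsuppL : ∀ a b, ηL (a, some b) ≠ 0 → R a b := by
    intro a b hne
    refine hsupp (a, b) fun h0 => hne ?_
    show ENNReal.ofReal (γ (a, b)) = 0
    rw [h0]; simp
  have hsuppR : ∀ a b, ηR (some a, b) ≠ 0 → R a b := by
    intro a b hne
    refine hsupp (a, b) fun h0 => hne ?_
    show ENNReal.ofReal (γ (a, b) / Real.exp ε) = 0
    rw [h0]; simp
  -- the dpDiv bound
  set D : Option A × Option B → ℝ≥0∞ := fun p =>
    match p with
    | (some a, none) => μ₁ a - ENNReal.ofReal (∑ b, γ (a, b))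
    | _ => 0 with hD
  have hDsum : ∑ p : Option A × Option B, D p ≤ ENNReal.ofReal δ := by
    have hval : ∑ p : Option A × Option B, D p
        = ∑ a, (μ₁ a - ENNReal.ofReal (∑ b, γ (a, b))) := by
      rw [Fintype.sum_prod_type, Fintype.sum_option]
      have h0 : ∑ ob : Option B, D (none, ob) = 0 :=
        Finset.sum_eq_zero fun ob _ => by cases ob <;> rfl
      rw [h0, zero_add]
      refine Finset.sum_congr rfl fun a _ => ?_
      rw [Fintype.sum_option]
      have h1 : ∑ b, D (some a, some b) = 0 := Finset.sum_eq_zero fun b _ => rfl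
      rw [h1, add_zero]
    rw [hval]
    have e2 : ∀ a, μ₁ a - ENNReal.ofReal (∑ b, γ (a, b))
        = ENNReal.ofReal (r1 a - ∑ b, γ (a, b)) := fun a => by
      rw [hμ₁eq a, ENNReal.ofReal_sub _ (hrow_nn a)]
    rw [Finset.sum_congr rfl fun a _ => e2 a,
      ← ENNReal.ofReal_sum_of_nonneg (fun a _ => sub_nonneg.2 (hrow a))]
    apply ENNReal.ofReal_le_ofReal
    rw [Finset.sum_sub_distrib]
    have e3 : ∑ a, ∑ b, γ (a, b) = ∑ e, γ e := (Fintype.sum_prod_type _).symm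
    rw [e3]
    linarith
  have hdp : dpDiv ε (extL ηL) (extR ηR) ≤ ENNReal.ofReal δ := by
    rw [dpDiv]
    refine iSup_le fun E => ?_
    rw [tsub_le_iff_right]
    have hpt : ∀ p : Option A × Option B, E.indicator (extL ηL) p ≤
        ENNReal.ofReal (Real.exp ε) * E.indicator (extR ηR) p + D p := by
      intro p
      by_cases hpE : p ∈ E
      · rw [Set.indicator_of_mem hpE, Set.indicator_of_mem hpE]
        obtain ⟨oa, ob⟩ := p
        cases oa with
        | none => exact le_trans (le_of_eq rfl) zero_le
        | some a =>
          cases ob with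
          | none =>
            show μ₁ a - ENNReal.ofReal (∑ b, γ (a, b)) ≤
              ENNReal.ofReal (Real.exp ε) * 0 + (μ₁ a - ENNReal.ofReal (∑ b, γ (a, b)))
            rw [mul_zero, zero_add]
          | some b =>
            show ENNReal.ofReal (γ (a, b)) ≤
              ENNReal.ofReal (Real.exp ε) * ENNReal.ofReal (γ (a, b) / Real.exp ε) + 0
            rw [add_zero, ← ENNReal.ofReal_mul (Real.exp_pos ε).le, mul_comm,
              div_mul_cancel₀ _ (Real.exp_ne_zero ε)]
      · rw [Set.indicator_of_notMem hpE, Set.indicator_of_notMem hpE]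
        exact zero_le
    calc mass (extL ηL) E = ∑ p, E.indicator (extL ηL) p := mass_eq_sum _ _
      _ ≤ ∑ p, (ENNReal.ofReal (Real.exp ε) * E.indicator (extR ηR) p + D p) :=
          Finset.sum_le_sum fun p _ => hpt p
      _ = ENNReal.ofReal (Real.exp ε) * (∑ p, E.indicator (extR ηR) p)
            + ∑ p : Option A × Option B, D p := by
          rw [Finset.sum_add_distrib, Finset.mul_sum]
      _ ≤ ENNReal.ofReal δ + ENNReal.ofReal (Real.exp ε) * mass (extR ηR) E := by
          rw [← mass_eq_sum, add_comm]
          exact add_le_add_left hDsum _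
  exact ⟨ηL, ηR, hsubL, hsubR, hmargL, hmargR, hsuppL, hsuppR, hdp⟩
end
end

section
/- (Easy direction of approximate Strassen.) Let μ₁ ∈ SubDist(A), μ₂ ∈ SubDist(B), R ⊆ A × B, ε, δ ≥ 0. If there exists an (ε,δ)-approximate ⋆-lifting of μ₁ and μ₂ for R, then for every X ⊆ A, μ₁[X] ≤ e^ε · μ₂[R(X)] + δ, where R(X) = {b : ∃a ∈ X, (a,b) ∈ R}. -/
open scoped ENNReal

noncomputable section

lemma tsum_option_of_none_eq_zero {A : Type*} {f : Option A → ℝ≥0∞} (h : f none = 0) :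
    ∑' x : Option A, f x = ∑' a : A, f (some a) := by
  refine (Function.Injective.tsum_eq (Option.some_injective A) ?_).symm
  intro x hx
  cases x with
  | none => exact absurd h hx
  | some a => exact ⟨a, rfl⟩

theorem approx_strassen_easy' {A B : Type*}
    (μ₁ : A → ℝ≥0∞) (μ₂ : B → ℝ≥0∞) (h₁ : SubDist μ₁) (h₂ : SubDist μ₂)
    (R : A → B → Prop) (ε δ : ℝ) (hε : 0 ≤ ε) (hδ : 0 ≤ δ)
    (h : StarLift ε δ μ₁ μ₂ R) :
    ∀ X : Set A,
      mass μ₁ X ≤ ENNReal.ofReal (Real.exp ε) * mass μ₂ (relImage R X) + ENNReal.ofReal δ := by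
  intro X
  obtain ⟨ηL, ηR, _, _, hMl, hMr, hSl, hSr, hdiv⟩ := h
  set Y : Set B := relImage R X with hY
  set E : Set (Option A × Option B) :=
    {p | (∃ a ∈ X, p.1 = some a) ∧ (p.2 = none ∨ ∃ b ∈ Y, p.2 = some b)} with hE
  -- Step 1 : mass (extL ηL) E = mass μ₁ X
  have step1 : mass (extL ηL) E = mass μ₁ X := by
    have expand : mass (extL ηL) E
        = ∑' x : Option A, ∑' y : Option B, E.indicator (extL ηL) (x, y) := by
      rw [mass, tsum_subtype, ENNReal.tsum_prod']
    have hnone : (∑' y : Option B, E.indicator (extL ηL) ((none : Option A), y)) = 0 := by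
      refine ENNReal.summable.tsum_eq_zero_iff.2 fun y => ?_
      apply Set.indicator_of_notMem
      rintro ⟨⟨a, _, hcontra⟩, _⟩
      simp at hcontra
    have hsome : ∀ a : A,
        (∑' y : Option B, E.indicator (extL ηL) (some a, y)) = X.indicator μ₁ a := by
      intro a
      by_cases ha : a ∈ X
      · have : ∀ y : Option B, E.indicator (extL ηL) (some a, y) = ηL (a, y) := by
          intro y
          cases y with
          | none =>
            rw [Set.indicator_of_mem]
            · rfl
            · exact ⟨⟨a, ha, rfl⟩, Or.inl rfl⟩
          | some b =>
            by_cases hb : (some a, some b) ∈ E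
            · rw [Set.indicator_of_mem hb]; rfl
            · rw [Set.indicator_of_notMem hb]
              by_contra hne
              exact hb ⟨⟨a, ha, rfl⟩, Or.inr ⟨b, ⟨a, ha, hSl a b (Ne.symm hne)⟩, rfl⟩⟩
        rw [tsum_congr this, hMl a, Set.indicator_of_mem ha]
      · rw [Set.indicator_of_notMem ha]
        refine ENNReal.summable.tsum_eq_zero_iff.2 fun y => ?_
        apply Set.indicator_of_notMem
        rintro ⟨⟨a', ha', heq⟩, _⟩
        rw [Option.some_inj] at heq
        exact ha (heq ▸ ha')
    rw [expand, tsum_option_of_none_eq_zero hnone, tsum_congr hsome, ← tsum_subtype, mass]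
  -- Step 2 : mass (extR ηR) E ≤ mass μ₂ Y
  have step2 : mass (extR ηR) E ≤ mass μ₂ Y := by
    have expand : mass (extR ηR) E
        = ∑' y : Option B, ∑' x : Option A, E.indicator (extR ηR) (x, y) := by
      rw [mass, tsum_subtype, ENNReal.tsum_prod', ENNReal.tsum_comm]
    have hnone : (∑' x : Option A, E.indicator (extR ηR) (x, (none : Option B))) = 0 := by
      refine ENNReal.summable.tsum_eq_zero_iff.2 fun x => ?_
      have h0 : extR ηR (x, (none : Option B)) = 0 := rfl
      exact le_antisymm (h0 ▸ Set.indicator_apply_le fun _ => le_rfl) zero_le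
    have hsome : ∀ b : B,
        (∑' x : Option A, E.indicator (extR ηR) (x, some b)) ≤ Y.indicator μ₂ b := by
      intro b
      by_cases hb : b ∈ Y
      · rw [Set.indicator_of_mem hb]
        calc (∑' x : Option A, E.indicator (extR ηR) (x, some b))
            ≤ ∑' x : Option A, extR ηR (x, some b) :=
              ENNReal.tsum_le_tsum fun x => Set.indicator_apply_le fun _ => le_rfl
          _ = ∑' x : Option A, ηR (x, b) := by rfl
          _ = μ₂ b := hMr b
      · rw [Set.indicator_of_notMem hb]
        refine le_of_eq (ENNReal.summable.tsum_eq_zero_iff.2 fun x => ?_)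
        apply Set.indicator_of_notMem
        rintro ⟨_, hcase⟩
        rcases hcase with hcase | ⟨b', hb', heq⟩
        · simp at hcase
        · rw [Option.some_inj] at heq
          exact hb (heq ▸ hb')
    calc mass (extR ηR) E
        = ∑' b : B, ∑' x : Option A, E.indicator (extR ηR) (x, some b) := by
          rw [expand, tsum_option_of_none_eq_zero hnone]
      _ ≤ ∑' b : B, Y.indicator μ₂ b := ENNReal.tsum_le_tsum hsome
      _ = mass μ₂ Y := by rw [← tsum_subtype, mass]
  -- Step 3 : conclude via the divergence bound
  have hE_le : mass (extL ηL) E - ENNReal.ofReal (Real.exp ε) * mass (extR ηR) E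
      ≤ ENNReal.ofReal δ := by
    rw [dpDiv] at hdiv
    exact le_trans (le_iSup (fun E => mass (extL ηL) E - ENNReal.ofReal (Real.exp ε) * mass (extR ηR) E) E) hdiv
  have key : mass (extL ηL) E
      ≤ ENNReal.ofReal (Real.exp ε) * mass (extR ηR) E + ENNReal.ofReal δ := by
    rw [← tsub_le_iff_left]
    exact hE_le
  calc mass μ₁ X = mass (extL ηL) E := step1.symm
    _ ≤ ENNReal.ofReal (Real.exp ε) * mass (extR ηR) E + ENNReal.ofReal δ := key
    _ ≤ ENNReal.ofReal (Real.exp ε) * mass μ₂ Y + ENNReal.ofReal δ := by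
        gcongr

theorem approx_strassen_easy {A B : Type*}
    (μ₁ : A → ℝ≥0∞) (μ₂ : B → ℝ≥0∞) (h₁ : SubDist μ₁) (h₂ : SubDist μ₂)
    (R : A → B → Prop) (ε δ : ℝ) (hε : 0 ≤ ε) (hδ : 0 ≤ δ)
    (h : StarLift ε δ μ₁ μ₂ R) :
    ∀ X : Set A,
      mass μ₁ X ≤ ENNReal.ofReal (Real.exp ε) * mass μ₂ (relImage R X) + ENNReal.ofReal δ := by
  exact approx_strassen_easy' μ₁ μ₂ h₁ h₂ R ε δ hε hδ h
end
end

section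
/- (Support lemma for ⋆-liftings.) If μ₁ ∈ SubDist(A) and μ₂ ∈ SubDist(B) admit an (ε,δ)-approximate ⋆-lifting for R ⊆ A × B, then there exist witnesses η_L, η_R for this lifting whose supports are contained in supp(μ₁)⋆ × supp(μ₂)⋆. -/
open scoped ENNReal

noncomputable section

/-! ### Auxiliary pushforward machinery -/

open Classical

section Push

variable {X Y : Type*}

lemma mass_eq_indicator (μ : X → ℝ≥0∞) (E : Set X) :
    mass μ E = ∑' x, E.indicator μ x := tsum_subtype E μ

/-- Pushforward of a subdistribution along a map. -/
def push (T : X → Y) (μ : X → ℝ≥0∞) : Y → ℝ≥0∞ :=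
  fun y => ∑' x, if T x = y then μ x else 0

lemma mass_push (T : X → Y) (μ : X → ℝ≥0∞) (E : Set Y) :
    mass (push T μ) E = mass μ (T ⁻¹' E) := by
  rw [mass_eq_indicator, mass_eq_indicator]
  calc ∑' y, E.indicator (push T μ) y
      = ∑' y, ∑' x, E.indicator (fun y' => if T x = y' then μ x else 0) y := by
        refine tsum_congr fun y => ?_
        by_cases hy : y ∈ E
        · simp [Set.indicator_of_mem hy, push]
        · simp [Set.indicator_of_notMem hy]
    _ = ∑' x, ∑' y, E.indicator (fun y' => if T x = y' then μ x else 0) y :=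
        ENNReal.tsum_comm
    _ = ∑' x, (T ⁻¹' E).indicator μ x := by
        refine tsum_congr fun x => ?_
        have h : ∀ y, E.indicator (fun y' => if T x = y' then μ x else 0) y
            = if y = T x then (T ⁻¹' E).indicator μ x else 0 := by
          intro y
          by_cases hy : y = T x
          · subst hy
            by_cases hE : T x ∈ E
            · rw [Set.indicator_of_mem hE, Set.indicator_of_mem (show x ∈ T ⁻¹' E from hE)]
            · rw [Set.indicator_of_notMem hE,
                Set.indicator_of_notMem (show x ∉ T ⁻¹' E from hE), if_pos rfl]
          · by_cases hE : y ∈ E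
            · simp [Set.indicator_of_mem hE, Ne.symm hy, hy]
            · simp [Set.indicator_of_notMem hE, hy]
        rw [tsum_congr h, tsum_ite_eq]

lemma subDist_push (T : X → Y) (μ : X → ℝ≥0∞) (h : SubDist μ) : SubDist (push T μ) := by
  unfold SubDist at *
  rw [mass_push]
  simpa using h

lemma dpDiv_push (T : X → Y) (ε : ℝ) (μ ν : X → ℝ≥0∞) :
    dpDiv ε (push T μ) (push T ν) ≤ dpDiv ε μ ν := by
  refine iSup_le fun E => ?_
  rw [mass_push, mass_push]
  exact le_iSup (fun F => mass μ F - ENNReal.ofReal (Real.exp ε) * mass ν F) (T ⁻¹' E)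

lemma push_ne_zero {T : X → Y} {μ : X → ℝ≥0∞} {y : Y} (h : push T μ y ≠ 0) :
    ∃ x, T x = y ∧ μ x ≠ 0 := by
  by_contra hc
  push_neg at hc
  refine h (ENNReal.tsum_eq_zero.mpr fun x => ?_)
  by_cases hT : T x = y
  · simp [hT, hc x hT]
  · simp [hT]

lemma mass_fst_line {A D : Type*} (ν : A × D → ℝ≥0∞) (a : A) :
    mass ν {p | p.1 = a} = ∑' d, ν (a, d) := by
  rw [mass_eq_indicator, ENNReal.tsum_prod']
  have h : ∀ a' : A, (∑' d, ({p : A × D | p.1 = a}).indicator ν (a', d))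
      = if a' = a then ∑' d, ν (a, d) else 0 := by
    intro a'
    by_cases ha : a' = a
    · subst ha
      rw [if_pos rfl]
      exact tsum_congr fun d =>
        Set.indicator_of_mem (show (a', d) ∈ {p : A × D | p.1 = a'} from rfl) ν
    · rw [if_neg ha]
      exact ENNReal.tsum_eq_zero.mpr fun d =>
        Set.indicator_of_notMem (show (a', d) ∉ {p : A × D | p.1 = a} from ha) ν
  rw [tsum_congr h, tsum_ite_eq]

lemma mass_snd_line {C A : Type*} (ν : C × A → ℝ≥0∞) (a : A) :
    mass ν {p | p.2 = a} = ∑' c, ν (c, a) := by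
  rw [mass_eq_indicator, ENNReal.tsum_prod']
  have h : ∀ c : C, (∑' a', ({p : C × A | p.2 = a}).indicator ν (c, a'))
      = ν (c, a) := by
    intro c
    have h2 : ∀ a' : A, ({p : C × A | p.2 = a}).indicator ν (c, a')
        = if a' = a then ν (c, a) else 0 := by
      intro a'
      by_cases ha : a' = a
      · subst ha
        rw [if_pos rfl]
        exact Set.indicator_of_mem (show (c, a') ∈ {p : C × A | p.2 = a'} from rfl) ν
      · rw [if_neg ha]
        exact Set.indicator_of_notMem (show (c, a') ∉ {p : C × A | p.2 = a} from ha) ν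
    rw [tsum_congr h2, tsum_ite_eq]
  exact tsum_congr h

lemma push_snd_marginal {A C D : Type*} (g : C → D) (μ : A × C → ℝ≥0∞) (a : A) :
    (∑' d, push (fun p : A × C => (p.1, g p.2)) μ (a, d)) = ∑' c, μ (a, c) := by
  have h1 := mass_fst_line (push (fun p : A × C => (p.1, g p.2)) μ) a
  have h2 := mass_push (fun p : A × C => (p.1, g p.2)) μ {p : A × D | p.1 = a}
  have h3 : (fun p : A × C => (p.1, g p.2)) ⁻¹' {p : A × D | p.1 = a}
      = {p : A × C | p.1 = a} := rfl
  rw [← h1, h2, h3, mass_fst_line]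

lemma push_fst_marginal {A C D : Type*} (g : C → D) (μ : C × A → ℝ≥0∞) (a : A) :
    (∑' d, push (fun p : C × A => (g p.1, p.2)) μ (d, a)) = ∑' c, μ (c, a) := by
  have h1 := mass_snd_line (push (fun p : C × A => (g p.1, p.2)) μ) a
  have h2 := mass_push (fun p : C × A => (g p.1, p.2)) μ {p : D × A | p.2 = a}
  have h3 : (fun p : C × A => (g p.1, p.2)) ⁻¹' {p : D × A | p.2 = a}
      = {p : C × A | p.2 = a} := rfl
  rw [← h1, h2, h3, mass_snd_line]

end Push

section Ext

variable {A B : Type*}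

lemma extL_push (fA : A → Option A) (fB : B → Option B) (ηL : A × Option B → ℝ≥0∞)
    (hfA : ∀ a, fA a = none → ∀ ob, ηL (a, ob) = 0)
    (hfA' : ∀ a a', fA a = some a' → a' = a) :
    extL (push (fun p : A × Option B => (p.1, p.2.bind fB)) ηL)
      = push (fun p : Option A × Option B => (p.1.bind fA, p.2.bind fB)) (extL ηL) := by
  funext p
  obtain ⟨oa, ob⟩ := p
  cases oa with
  | none =>
    show (0 : ℝ≥0∞) = _
    symm
    refine ENNReal.tsum_eq_zero.mpr fun x => ?_
    obtain ⟨oa', ob'⟩ := x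
    cases oa' with
    | none => simp [extL]
    | some a =>
      by_cases ha : fA a = none
      · simp [extL, hfA a ha]
      · simp [extL, Prod.ext_iff, ha]
  | some a' =>
    show push (fun p : A × Option B => (p.1, p.2.bind fB)) ηL (a', ob) = _
    symm
    have hinj : Function.Injective
        (fun x : A × Option B => ((some x.1 : Option A), x.2)) := by
      intro x y hxy
      simpa [Prod.ext_iff] using hxy
    simp only [push]
    refine ((Function.Injective.tsum_eq hinj ?_).symm.trans (tsum_congr fun x => ?_))
    · rintro ⟨_ | a, ob'⟩ hy
      · exact absurd (by simp [extL]) hy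
      · exact ⟨(a, ob'), rfl⟩
    · obtain ⟨a, ob'⟩ := x
      rcases h : fA a with _ | a''
      · have h0 := hfA a h
        simp [extL, h, h0]
      · have hA := hfA' a a'' h
        subst hA
        simp [extL, h, Prod.ext_iff]

lemma extR_push (fA : A → Option A) (fB : B → Option B) (ηR : Option A × B → ℝ≥0∞)
    (hfB : ∀ b, fB b = none → ∀ oa, ηR (oa, b) = 0)
    (hfB' : ∀ b b', fB b = some b' → b' = b) :
    extR (push (fun p : Option A × B => (p.1.bind fA, p.2)) ηR)
      = push (fun p : Option A × Option B => (p.1.bind fA, p.2.bind fB)) (extR ηR) := by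
  funext p
  obtain ⟨oa, ob⟩ := p
  cases ob with
  | none =>
    show (0 : ℝ≥0∞) = _
    symm
    refine ENNReal.tsum_eq_zero.mpr fun x => ?_
    obtain ⟨oa', ob'⟩ := x
    cases ob' with
    | none => simp [extR]
    | some b =>
      by_cases hb : fB b = none
      · simp [extR, hfB b hb]
      · simp [extR, Prod.ext_iff, hb]
  | some b' =>
    show push (fun p : Option A × B => (p.1.bind fA, p.2)) ηR (oa, b') = _
    symm
    have hinj : Function.Injective
        (fun x : Option A × B => (x.1, (some x.2 : Option B))) := by
      intro x y hxy
      simpa [Prod.ext_iff] using hxy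
    simp only [push]
    refine ((Function.Injective.tsum_eq hinj ?_).symm.trans (tsum_congr fun x => ?_))
    · rintro ⟨oa', _ | b⟩ hy
      · exact absurd (by simp [extR]) hy
      · exact ⟨(oa', b), rfl⟩
    · obtain ⟨oa', b⟩ := x
      rcases h : fB b with _ | b''
      · have h0 := hfB b h
        simp [extR, h, h0]
      · have hB := hfB' b b'' h
        subst hB
        simp [extR, h, Prod.ext_iff]

end Ext

theorem starLift_support {A B : Type*}
    (μ₁ : A → ℝ≥0∞) (μ₂ : B → ℝ≥0∞) (h₁ : SubDist μ₁) (h₂ : SubDist μ₂)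
    (R : A → B → Prop) (ε δ : ℝ) (hε : 0 ≤ ε) (hδ : 0 ≤ δ)
    (h : StarLift ε δ μ₁ μ₂ R) :
    ∃ ηL ηR, IsStarWitness ε δ μ₁ μ₂ R ηL ηR ∧
      (∀ a (b : Option B), ηL (a, b) ≠ 0 →
        μ₁ a ≠ 0 ∧ ∀ b', b = some b' → μ₂ b' ≠ 0) ∧
      (∀ (a : Option A) b, ηR (a, b) ≠ 0 →
        μ₂ b ≠ 0 ∧ ∀ a', a = some a' → μ₁ a' ≠ 0) := by
  obtain ⟨ηL, ηR, hSL, hSR, hm1, hm2, hRL, hRR, hdp⟩ := h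
  set fA : A → Option A := fun a => if μ₁ a = 0 then none else some a with hfAdef
  set fB : B → Option B := fun b => if μ₂ b = 0 then none else some b with hfBdef
  have hfA_none : ∀ a, fA a = none → μ₁ a = 0 := by
    intro a ha
    by_contra hc
    simp [hfAdef, hc] at ha
  have hfA_some : ∀ a a', fA a = some a' → a' = a ∧ μ₁ a' ≠ 0 := by
    intro a a' ha
    by_cases hc : μ₁ a = 0
    · simp [hfAdef, hc] at ha
    · simp [hfAdef, hc] at ha
      exact ⟨ha.symm, ha ▸ hc⟩
  have hfB_none : ∀ b, fB b = none → μ₂ b = 0 := by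
    intro b hb
    by_contra hc
    simp [hfBdef, hc] at hb
  have hfB_some : ∀ b b', fB b = some b' → b' = b ∧ μ₂ b' ≠ 0 := by
    intro b b' hb
    by_cases hc : μ₂ b = 0
    · simp [hfBdef, hc] at hb
    · simp [hfBdef, hc] at hb
      exact ⟨hb.symm, hb ▸ hc⟩
  have hrowL : ∀ a, μ₁ a = 0 → ∀ ob, ηL (a, ob) = 0 := by
    intro a ha ob
    exact ENNReal.tsum_eq_zero.mp ((hm1 a).trans ha) ob
  have hcolR : ∀ b, μ₂ b = 0 → ∀ oa, ηR (oa, b) = 0 := by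
    intro b hb oa
    exact ENNReal.tsum_eq_zero.mp ((hm2 b).trans hb) oa
  refine ⟨push (fun p : A × Option B => (p.1, p.2.bind fB)) ηL,
          push (fun p : Option A × B => (p.1.bind fA, p.2)) ηR,
          ⟨subDist_push _ _ hSL, subDist_push _ _ hSR, ?_, ?_, ?_, ?_, ?_⟩, ?_, ?_⟩
  · intro a
    exact (push_snd_marginal (fun ob : Option B => ob.bind fB) ηL a).trans (hm1 a)
  · intro b
    exact (push_fst_marginal (fun oa : Option A => oa.bind fA) ηR b).trans (hm2 b)
  · intro a b hne
    obtain ⟨⟨a₀, ob₀⟩, hT, hη⟩ := push_ne_zero hne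
    have ha : a₀ = a := congrArg Prod.fst hT
    have hb : ob₀.bind fB = some b := congrArg Prod.snd hT
    subst ha
    cases ob₀ with
    | none => simp at hb
    | some b₀ =>
      obtain ⟨hbb, -⟩ := hfB_some b₀ b (by simpa using hb)
      exact hRL a₀ b (by rw [hbb]; exact hη)
  · intro a b hne
    obtain ⟨⟨oa₀, b₀⟩, hT, hη⟩ := push_ne_zero hne
    have hbq : b₀ = b := congrArg Prod.snd hT
    have hao : oa₀.bind fA = some a := congrArg Prod.fst hT
    subst hbq
    cases oa₀ with
    | none => simp at hao
    | some a₀ =>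
      obtain ⟨haa, -⟩ := hfA_some a₀ a (by simpa using hao)
      exact hRR a b₀ (by rw [haa]; exact hη)
  · -- dpDiv bound
    have e1 := extL_push fA fB ηL (fun a ha => hrowL a (hfA_none a ha))
      (fun a a' ha => (hfA_some a a' ha).1)
    have e2 := extR_push fA fB ηR (fun b hb => hcolR b (hfB_none b hb))
      (fun b b' hb => (hfB_some b b' hb).1)
    rw [e1, e2]
    exact (dpDiv_push _ ε _ _).trans hdp
  · intro a ob hne
    obtain ⟨⟨a₀, ob₀⟩, hT, hη⟩ := push_ne_zero hne
    have ha : a₀ = a := congrArg Prod.fst hT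
    have hb : ob₀.bind fB = ob := congrArg Prod.snd hT
    subst ha
    refine ⟨fun h0 => hη (hrowL a₀ h0 ob₀), ?_⟩
    intro b' hb'
    subst hb'
    cases ob₀ with
    | none => simp at hb
    | some b₀ => exact (hfB_some b₀ b' (by simpa using hb)).2
  · intro oa b hne
    obtain ⟨⟨oa₀, b₀⟩, hT, hη⟩ := push_ne_zero hne
    have hbq : b₀ = b := congrArg Prod.snd hT
    have hao : oa₀.bind fA = oa := congrArg Prod.fst hT
    subst hbq
    refine ⟨fun h0 => hη (hcolR b₀ h0 oa₀), ?_⟩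
    intro a' ha'
    subst ha'
    cases oa₀ with
    | none => simp at hao
    | some a₀ => exact (hfA_some a₀ a' (by simpa using hao)).2
end
end

section
/- (Up-to-bad, left.) Let μ₁ ∈ SubDist(A), μ₂ ∈ SubDist(B), θ ⊆ A, R ⊆ A × B. Suppose for all X ⊆ A, μ₁[X] ≤ e^ε μ₂[(θ_◁ ⟹ R)(X)] + δ, where (θ_◁ ⟹ R) = {(a,b) : a ∈ θ → (a,b) ∈ R}. Then for all X ⊆ A, μ₁[X] ≤ e^ε μ₂[R(X)] + δ + μ₁[A∖θ]. -/
open scoped ENNReal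

noncomputable section

lemma mass_mono' {A : Type*} (μ : A → ℝ≥0∞) {X Y : Set A} (hXY : X ⊆ Y) :
    mass μ X ≤ mass μ Y := by
  simp only [mass, tsum_subtype]
  exact ENNReal.tsum_le_tsum fun a =>
    Set.indicator_le_indicator_of_subset hXY (fun _ => zero_le) a

theorem up_to_bad_left {A B : Type*} [Countable A] [Countable B]
    (μ₁ : A → ℝ≥0∞) (μ₂ : B → ℝ≥0∞) (h₁ : SubDist μ₁) (h₂ : SubDist μ₂)
    (θ : Set A) (R : A → B → Prop) (ε δ : ℝ) (hε : 0 ≤ ε) (hδ : 0 ≤ δ)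
    (h : ∀ X : Set A,
      mass μ₁ X ≤ ENNReal.ofReal (Real.exp ε)
          * mass μ₂ (relImage (fun a b => a ∈ θ → R a b) X) + ENNReal.ofReal δ) :
    ∀ X : Set A,
      mass μ₁ X ≤ ENNReal.ofReal (Real.exp ε) * mass μ₂ (relImage R X)
        + ENNReal.ofReal δ + mass μ₁ θᶜ := by
  intro X
  have hmono : mass μ₂ (relImage (fun a b => a ∈ θ → R a b) (X ∩ θ)) ≤
      mass μ₂ (relImage R X) :=
    mass_mono' μ₂ (fun b hb => by
      obtain ⟨a, ⟨haX, haθ⟩, hab⟩ := hb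
      exact ⟨a, haX, hab haθ⟩)
  have hsplit : mass μ₁ X ≤ mass μ₁ (X ∩ θ) + mass μ₁ θᶜ := by
    calc mass μ₁ X ≤ mass μ₁ ((X ∩ θ) ∪ θᶜ) := by
          simp only [mass, tsum_subtype]
          refine ENNReal.tsum_le_tsum fun a => Set.indicator_le_indicator_of_subset
            (fun a ha => ?_) (fun _ => zero_le) a
          by_cases hθ : a ∈ θ
          · exact Or.inl ⟨ha, hθ⟩
          · exact Or.inr hθ
      _ ≤ mass μ₁ (X ∩ θ) + mass μ₁ θᶜ := ENNReal.tsum_union_le μ₁ _ _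
  calc mass μ₁ X ≤ mass μ₁ (X ∩ θ) + mass μ₁ θᶜ := hsplit
    _ ≤ (ENNReal.ofReal (Real.exp ε)
          * mass μ₂ (relImage (fun a b => a ∈ θ → R a b) (X ∩ θ)) + ENNReal.ofReal δ)
        + mass μ₁ θᶜ := add_le_add_left (h (X ∩ θ)) _
    _ ≤ _ := by gcongr
end
end

section
/- (⋆-liftings generalize 2-liftings.) If (μ_L, μ_R) is an (ε,δ)-approximate 2-lifting of μ₁ ∈ SubDist(A) and μ₂ ∈ SubDist(B) for R ⊆ A × B (witnesses over A × B with π₁(μ_L)=μ₁, π₂(μ_R)=μ₂, supp(μ_L), supp(μ_R) ⊆ R, Δ_ε(μ_L,μ_R) ≤ δ), then there exists an (ε,δ)-approximate ⋆-lifting of μ₁ and μ₂ for R. Moreover, the converse fails: there exist μ, ε, and relations R for which an (ε,0)-⋆-lifting exists but no (ε,0)-2-lifting exists. -/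
open scoped ENNReal

noncomputable section

/-- Witness conditions for an `(ε,δ)`-approximate 2-lifting. -/
def IsTwoWitness {A B : Type*} (ε δ : ℝ) (μ₁ : A → ℝ≥0∞) (μ₂ : B → ℝ≥0∞)
    (R : A → B → Prop) (μL μR : A × B → ℝ≥0∞) : Prop :=
  SubDist μL ∧ SubDist μR ∧
  (∀ a, (∑' b : B, μL (a, b)) = μ₁ a) ∧
  (∀ b, (∑' a : A, μR (a, b)) = μ₂ b) ∧
  (∀ a b, μL (a, b) ≠ 0 → R a b) ∧
  (∀ a b, μR (a, b) ≠ 0 → R a b) ∧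
  dpDiv ε μL μR ≤ ENNReal.ofReal δ

/-- Existence of an `(ε,δ)`-approximate 2-lifting. -/
def TwoLift {A B : Type*} (ε δ : ℝ) (μ₁ : A → ℝ≥0∞) (μ₂ : B → ℝ≥0∞)
    (R : A → B → Prop) : Prop :=
  ∃ μL μR, IsTwoWitness ε δ μ₁ μ₂ R μL μR


/-! ### Auxiliary lemmas -/

lemma mass_univ {A : Type*} (μ : A → ℝ≥0∞) : mass μ Set.univ = ∑' a, μ a :=
  tsum_univ μ

lemma tsum_option_eq {B : Type*} (f : Option B → ℝ≥0∞) :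
    ∑' ob : Option B, f ob = f none + ∑' b : B, f (some b) := by
  classical
  rw [ENNReal.tsum_eq_add_tsum_ite none]
  congr 1
  exact ((Option.some_injective B).tsum_eq
    (by rintro (_ | b) hy
        · simp at hy
        · exact ⟨b, rfl⟩)).symm.trans (tsum_congr fun b => by simp)

lemma mass_ext {α β : Type*} {j : α → β} (hj : Function.Injective j)
    {g : β → ℝ≥0∞} (hg : ∀ y, y ∉ Set.range j → g y = 0) (E : Set β) :
    mass g E = mass (fun x => g (j x)) (j ⁻¹' E) := by
  unfold mass
  rw [tsum_subtype E g, tsum_subtype (j ⁻¹' E) (fun x => g (j x)),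
    ← hj.tsum_eq (f := E.indicator g)
    (by intro y hy
        by_contra hr
        exact hy (by simp [Set.indicator_apply, hg y hr]))]
  refine tsum_congr fun x => ?_
  by_cases hx : j x ∈ E <;> simp [Set.indicator_apply, hx]

lemma dpDiv_pointwise_aux {B : Type*} {c : ℝ≥0∞} {μ ν : B → ℝ≥0∞}
    (h : ∀ x, μ x ≤ c * ν x) (E : Set B) : mass μ E ≤ c * mass ν E := by
  calc mass μ E ≤ ∑' x : E, c * ν x := ENNReal.tsum_le_tsum (fun x => h x)
    _ = c * mass ν E := ENNReal.tsum_mul_left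

lemma four_inv_add : (4:ℝ≥0∞)⁻¹ + 4⁻¹ = 2⁻¹ := by
  have h4 : (4:ℝ≥0∞) = 2 * 2 := by norm_num
  rw [← two_mul, h4, ENNReal.mul_inv (Or.inl two_ne_zero) (Or.inl ENNReal.ofNat_ne_top),
    ← mul_assoc, ENNReal.mul_inv_cancel two_ne_zero ENNReal.ofNat_ne_top, one_mul]

/-- left witness lifted to `A × Option B`. -/
def liftL {A B : Type*} (μL : A × B → ℝ≥0∞) : A × Option B → ℝ≥0∞ :=
  fun p => p.2.elim 0 (fun b => μL (p.1, b))

/-- right witness lifted to `Option A × B`. -/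
def liftR {A B : Type*} (μR : A × B → ℝ≥0∞) : Option A × B → ℝ≥0∞ :=
  fun p => p.1.elim 0 (fun a => μR (a, p.2))

@[simp] lemma liftL_some {A B : Type*} (μL : A × B → ℝ≥0∞) (a : A) (b : B) :
    liftL μL (a, some b) = μL (a, b) := rfl

@[simp] lemma liftL_none {A B : Type*} (μL : A × B → ℝ≥0∞) (a : A) :
    liftL μL (a, none) = 0 := rfl

@[simp] lemma liftR_some {A B : Type*} (μR : A × B → ℝ≥0∞) (a : A) (b : B) :
    liftR μR (some a, b) = μR (a, b) := rfl

@[simp] lemma liftR_none {A B : Type*} (μR : A × B → ℝ≥0∞) (b : B) :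
    liftR μR (none, b) = 0 := rfl

/-- Concrete left witness for the counterexample. -/
def exL : Bool × Option Bool → ℝ≥0∞ :=
  fun p => if p.2 = some true then 2⁻¹ else 0

/-- Concrete right witness for the counterexample. -/
def exR : Option Bool × Bool → ℝ≥0∞ :=
  fun p => if p.2 = true then (if p.1 = none then 0 else 4⁻¹)
           else (if p.1 = none then 2⁻¹ else 0)

theorem twoLift_subset_starLift_and_strict :
    (∀ {A B : Type} (μ₁ : A → ℝ≥0∞) (μ₂ : B → ℝ≥0∞) (R : A → B → Prop) (ε δ : ℝ),
      0 ≤ ε → 0 ≤ δ → SubDist μ₁ → SubDist μ₂ →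
      TwoLift ε δ μ₁ μ₂ R → StarLift ε δ μ₁ μ₂ R) ∧
    (∃ (A : Type) (μ : A → ℝ≥0∞) (R : A → A → Prop) (ε : ℝ),
      0 ≤ ε ∧ SubDist μ ∧ StarLift ε 0 μ μ R ∧ ¬ TwoLift ε 0 μ μ R) := by
  constructor
  · -- 2-liftings give ⋆-liftings
    intro A B μ₁ μ₂ R ε δ hε hδ h1 h2 h
    obtain ⟨μL, μR, hSL, hSR, hM1, hM2, hsL, hsR, hdp⟩ := h
    have rowL : ∀ a, (∑' ob : Option B, liftL μL (a, ob)) = μ₁ a := fun a => by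
      rw [tsum_option_eq]
      simpa using hM1 a
    have colR : ∀ b, (∑' oa : Option A, liftR μR (oa, b)) = μ₂ b := fun b => by
      rw [tsum_option_eq]
      simpa using hM2 b
    set j : A × B → Option A × Option B := fun p => (some p.1, some p.2) with hjdef
    have hjinj : Function.Injective j := by
      intro p q hpq
      simp only [hjdef, Prod.mk.injEq, Option.some.injEq] at hpq
      exact Prod.ext hpq.1 hpq.2
    refine ⟨liftL μL, liftR μR, ?_, ?_, rowL, colR, ?_, ?_, ?_⟩
    · show mass (liftL μL) Set.univ ≤ 1
      rw [mass_univ, ENNReal.tsum_prod', tsum_congr rowL, ← mass_univ]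
      exact h1
    · show mass (liftR μR) Set.univ ≤ 1
      rw [mass_univ, ENNReal.tsum_prod', ENNReal.tsum_comm, tsum_congr colR, ← mass_univ]
      exact h2
    · intro a b hab
      exact hsL a b hab
    · intro a b hab
      exact hsR a b hab
    · -- the distance condition
      refine iSup_le fun E => ?_
      have e1 : mass (extL (liftL μL)) E = mass μL (j ⁻¹' E) := by
        rw [mass_ext hjinj (g := extL (liftL μL))
          (by rintro ⟨(_ | a), (_ | b)⟩ hy
              · rfl
              · rfl
              · rfl
              · exact absurd ⟨(a, b), rfl⟩ hy) E]
        rfl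
      have e2 : mass (extR (liftR μR)) E = mass μR (j ⁻¹' E) := by
        rw [mass_ext hjinj (g := extR (liftR μR))
          (by rintro ⟨(_ | a), (_ | b)⟩ hy
              · rfl
              · rfl
              · rfl
              · exact absurd ⟨(a, b), rfl⟩ hy) E]
        rfl
      rw [e1, e2]
      exact le_trans
        (le_iSup (fun F => mass μL F - ENNReal.ofReal (Real.exp ε) * mass μR F) (j ⁻¹' E)) hdp
  · -- strictness
    refine ⟨Bool, fun _ => 2⁻¹, fun _ b => b = true, Real.log 2,
      Real.log_nonneg one_le_two, ?_, ?_, ?_⟩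
    · show mass (fun _ : Bool => (2:ℝ≥0∞)⁻¹) Set.univ ≤ 1
      rw [mass_univ, tsum_bool, ENNReal.inv_two_add_inv_two]
    · -- the ⋆-lifting exists
      have rowL : ∀ a : Bool, (∑' ob : Option Bool, exL (a, ob)) = 2⁻¹ := fun a => by
        rw [tsum_option_eq, tsum_bool]
        simp [exL]
      have colR : ∀ b : Bool, (∑' oa : Option Bool, exR (oa, b)) = 2⁻¹ := fun b => by
        rw [tsum_option_eq, tsum_bool]
        cases b <;> simp [exR, four_inv_add]
      refine ⟨exL, exR, ?_, ?_, rowL, colR, ?_, ?_, ?_⟩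
      · show mass exL Set.univ ≤ 1
        rw [mass_univ, ENNReal.tsum_prod', tsum_congr rowL, tsum_bool,
          ENNReal.inv_two_add_inv_two]
      · show mass exR Set.univ ≤ 1
        rw [mass_univ, ENNReal.tsum_prod', ENNReal.tsum_comm, tsum_congr colR, tsum_bool,
          ENNReal.inv_two_add_inv_two]
      · intro a b hab
        cases b
        · exact absurd (by simp [exL]) hab
        · rfl
      · intro a b hab
        cases b
        · exact absurd (by simp [exR]) hab
        · rfl
      · -- the distance condition
        have hc : ENNReal.ofReal (Real.exp (Real.log 2)) = 2 := by
          rw [Real.exp_log (by norm_num : (0:ℝ) < 2)]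
          simp
        have h24 : (2:ℝ≥0∞)⁻¹ ≤ 2 * 4⁻¹ := by
          rw [two_mul, four_inv_add]
        have hpt : ∀ x, extL exL x ≤ 2 * extR exR x := by
          rintro ⟨(_ | a), (_ | (_ | _))⟩ <;>
            (simp [extL, extR, exL, exR]; try exact h24)
        rw [ENNReal.ofReal_zero]
        refine iSup_le fun E => ?_
        refine tsub_le_iff_right.mpr ?_
        rw [zero_add, hc]
        exact dpDiv_pointwise_aux hpt E
    · -- no 2-lifting
      rintro ⟨μL, μR, -, -, -, hM2, -, hsR, -⟩
      have h0 : ∀ a : Bool, μR (a, false) = 0 := by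
        intro a
        by_contra hne
        simpa using hsR a false hne
      have hfalse := hM2 false
      rw [tsum_congr h0, tsum_zero] at hfalse
      exact absurd hfalse.symm (by simp)
end
end

section
/- (A counterexample for 2-liftings.) Let γ ∈ Dist(ℕ) be the geometric distribution γ(k) = 1/2^{k+1}, and R = {(x₁,x₂) ∈ ℕ × ℕ : x₁ + 1 = x₂}. Then for every ε, δ ≥ 0 with δ < 1/2, there is no (ε,δ)-approximate 2-lifting of γ with itself for R; in particular no pair μ_L, μ_R ∈ SubDist(ℕ × ℕ) exists with π₁(μ_L) = γ, π₂(μ_R) = γ, supp(μ_L), supp(μ_R) ⊆ R, and Δ_ε(μ_L,μ_R) ≤ δ. -/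
open scoped ENNReal

noncomputable section

theorem geometric_no_twoLift (ε δ : ℝ) (hε : 0 ≤ ε) (hδ0 : 0 ≤ δ) (hδ : δ < 1/2) :
    ¬ TwoLift ε δ
      (fun k : ℕ => (1/2 : ℝ≥0∞) ^ (k + 1))
      (fun k : ℕ => (1/2 : ℝ≥0∞) ^ (k + 1))
      (fun x₁ x₂ => x₁ + 1 = x₂) := by
  rintro ⟨μL, μR, _, _, _, h4, _, h6, _⟩
  have h0 := h4 0
  have hz : ∀ a : ℕ, μR (a, 0) = 0 := by
    intro a
    by_contra h
    exact Nat.succ_ne_zero a (h6 a 0 h)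
  simp only [hz, tsum_zero] at h0
  simp at h0
  exact (ENNReal.inv_ne_zero.mpr (by norm_num)) h0.symm
end
end
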